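/- Let t ≥ 1, n_1,…,n_t ≥ 1 with N = n_1+…+n_t ≥ 2, and for each i let G_i ∈ 𝔽_{q^m}^{2×n_i} be a matrix whose n_i columns are linearly independent over 𝔽_q, with U_i ⊆ 𝔽_{q^m}² the 𝔽_q-span of the columns of G_i; assume the U_i together span 𝔽_{q^m}² over 𝔽_{q^m}. Then the following are equivalent: (a) for every nonzero v ∈ 𝔽_{q^m}², Σ_{i=1}^t rk_q(v·G_i) = N − 1 (i.e., the associated 2-dimensional code is a one-weight maximum sum-rank distance code); (b) for every one-dimensional 𝔽_{q^m}-subspace S of 𝔽_{q^m}², Σ_{i=1}^t dim_{𝔽_q}(U_i ∩ S) = 1 (i.e., the multi-linear set L_U is scattered and covers all of PG(1, q^m)). -/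

import Mathlib

open Matrix

section Aux
variable {Fq Fqm : Type} [Field Fq] [Field Fqm] [Fintype Fq] [Fintype Fqm] [Algebra Fq Fqm]

/-- dot product with `v` as an `Fqm`-linear map. -/
def dotL (v : Fin 2 → Fqm) : (Fin 2 → Fqm) →ₗ[Fqm] Fqm where
  toFun w := v ⬝ᵥ w
  map_add' w₁ w₂ := dotProduct_add v w₁ w₂
  map_smul' c w := dotProduct_smul c v w

lemma finrank_ker_dotL {v : Fin 2 → Fqm} (hv : v ≠ 0) :
    Module.finrank Fqm (LinearMap.ker (dotL v)) = 1 := by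
  have hsurj : LinearMap.range (dotL v) = ⊤ := by
    obtain ⟨k, hk⟩ : ∃ k, v k ≠ 0 := by
      by_contra h; push_neg at h; exact hv (funext fun k => h k)
    rw [LinearMap.range_eq_top]
    intro c
    refine ⟨Pi.single k ((v k)⁻¹ * c), ?_⟩
    simp only [dotL, LinearMap.coe_mk, AddHom.coe_mk, dotProduct, Pi.single_apply]
    rw [Finset.sum_eq_single k]
    · rw [if_pos rfl, ← mul_assoc, mul_inv_cancel₀ hk, one_mul]
    · intro b _ hb; simp [hb]
    · simp
  have := LinearMap.finrank_range_add_finrank_ker (dotL v)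
  rw [hsurj] at this
  simp only [finrank_top, Module.finrank_self] at this
  have h2 : Module.finrank Fqm (Fin 2 → Fqm) = 2 := by simp
  omega

lemma key_rank_eq {ni : ℕ} (M : Matrix (Fin 2) (Fin ni) Fqm)
    (hM : LinearIndependent Fq (fun j : Fin ni => Mᵀ j)) (v : Fin 2 → Fqm) :
    Module.finrank Fq (Submodule.span Fq (Set.range (Matrix.vecMul v M)))
      + Module.finrank Fq
          ↥(Submodule.span Fq (Set.range (fun j : Fin ni => Mᵀ j))
            ⊓ Submodule.restrictScalars Fq (LinearMap.ker (dotL v))) = ni := by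
  set U : Submodule Fq (Fin 2 → Fqm) :=
    Submodule.span Fq (Set.range (fun j : Fin ni => Mᵀ j)) with hU
  set g : (Fin 2 → Fqm) →ₗ[Fq] Fqm := (dotL v).restrictScalars Fq with hg
  have hcomp : Matrix.vecMul v M = g ∘ (fun j : Fin ni => Mᵀ j) := by
    funext j; rfl
  have hspan : Submodule.span Fq (Set.range (Matrix.vecMul v M)) = U.map g := by
    rw [hcomp, Set.range_comp, ← Submodule.map_span]
  have hrn := LinearMap.finrank_range_add_finrank_ker (g.domRestrict U)
  rw [LinearMap.range_domRestrict, LinearMap.ker_domRestrict] at hrn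
  have hker2 : Module.finrank Fq ↥(Submodule.comap U.subtype (LinearMap.ker g))
      = Module.finrank Fq ↥(U ⊓ Submodule.restrictScalars Fq (LinearMap.ker (dotL v))) := by
    rw [← Submodule.finrank_map_subtype_eq U, Submodule.map_comap_subtype, hg,
      LinearMap.ker_restrictScalars]
  rw [hker2] at hrn
  have hUrank : Module.finrank Fq U = ni := by
    rw [hU, finrank_span_eq_card hM, Fintype.card_fin]
  rw [hspan, ← hUrank]
  exact hrn

lemma exists_v_of_rank_one {S : Submodule Fqm (Fin 2 → Fqm)}
    (hS : Module.finrank Fqm S = 1) :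
    ∃ v : Fin 2 → Fqm, v ≠ 0 ∧ S = LinearMap.ker (dotL v) := by
  have hpos : 0 < Module.finrank Fqm S := by omega
  haveI : Nontrivial S := Module.finrank_pos_iff.mp hpos
  obtain ⟨sv, hs0⟩ := exists_ne (0 : S)
  obtain ⟨s, hsS⟩ := sv
  have hs : s ≠ 0 := fun h => hs0 (Subtype.ext h)
  have hSspan : S = Submodule.span Fqm {s} := by
    symm
    apply Submodule.eq_of_le_of_finrank_eq
    · rw [Submodule.span_le, Set.singleton_subset_iff]; exact hsS
    · rw [finrank_span_singleton hs, hS]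
  refine ⟨![s 1, -(s 0)], ?_, ?_⟩
  · intro h
    apply hs
    have h0 := congrFun h 0
    have h1 := congrFun h 1
    simp at h0 h1
    ext k; fin_cases k <;> simp [h0, h1]
  · apply Submodule.eq_of_le_of_finrank_eq
    · rw [hSspan, Submodule.span_le, Set.singleton_subset_iff]
      show dotL ![s 1, -(s 0)] s = 0
      show (![s 1, -(s 0)] : Fin 2 → Fqm) ⬝ᵥ s = 0
      rw [dotProduct]
      rw [Fin.sum_univ_two]
      simp [mul_comm]
    · rw [hS, finrank_ker_dotL]
      intro h
      apply hs
      have h0 := congrFun h 0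
      have h1 := congrFun h 1
      simp at h0 h1
      ext k; fin_cases k <;> simp [h0, h1]

end Aux


/-- characterization of 2-dimensional one-weight MSRD codes:
for a nondegenerate 2-dimensional system `(U 1, …, U t)` spanning `Fqm²`, every nonzero
codeword has sum-rank weight `N − 1` iff every one-dimensional `Fqm`-subspace `S` of `Fqm²`
satisfies `∑ i dim_{Fq}(U i ∩ S) = 1` (scattered multi-linear set covering `PG(1, q^m)`). -/
theorem one_weight_MSRD_iff_scattered_cover
    (Fq Fqm : Type) [Field Fq] [Field Fqm] [Fintype Fq] [Fintype Fqm] [Algebra Fq Fqm]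
    (t : ℕ) (ht : 1 ≤ t) (n : Fin t → ℕ) (hn : ∀ i, 1 ≤ n i)
    (N : ℕ) (hN : N = ∑ i, n i) (hN2 : 2 ≤ N)
    (G : ∀ i : Fin t, Matrix (Fin 2) (Fin (n i)) Fqm)
    (hG : ∀ i, LinearIndependent Fq (fun j : Fin (n i) => (G i)ᵀ j))
    (hspan : Submodule.span Fqm
      (⋃ i, ((Submodule.span Fq (Set.range (fun j : Fin (n i) => (G i)ᵀ j)) :
        Submodule Fq (Fin 2 → Fqm)) : Set (Fin 2 → Fqm))) = ⊤) :
    (∀ v : Fin 2 → Fqm, v ≠ 0 →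
        ∑ i, Module.finrank Fq (Submodule.span Fq (Set.range (Matrix.vecMul v (G i))))
          = N - 1)
      ↔ (∀ S : Submodule Fqm (Fin 2 → Fqm), Module.finrank Fqm S = 1 →
          ∑ i, Module.finrank Fq
            ↥(Submodule.span Fq (Set.range (fun j : Fin (n i) => (G i)ᵀ j))
              ⊓ Submodule.restrictScalars Fq S) = 1) := by
  have key : ∀ v : Fin 2 → Fqm,
      ∑ i, Module.finrank Fq (Submodule.span Fq (Set.range (Matrix.vecMul v (G i))))
        + ∑ i, Module.finrank Fq
            ↥(Submodule.span Fq (Set.range (fun j : Fin (n i) => (G i)ᵀ j))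
              ⊓ Submodule.restrictScalars Fq (LinearMap.ker (dotL v))) = N := by
    intro v
    rw [← Finset.sum_add_distrib, hN]
    exact Finset.sum_congr rfl fun i _ => key_rank_eq (G i) (hG i) v
  constructor
  · intro ha S hS
    obtain ⟨v, hv, rfl⟩ := exists_v_of_rank_one hS
    have h1 := key v
    have h2 := ha v hv
    omega
  · intro hb v hv
    have hS : Module.finrank Fqm (LinearMap.ker (dotL v)) = 1 := finrank_ker_dotL hv
    have h1 := key v
    have h2 := hb _ hS
    omega
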